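/- Let S be a complete semiring and (C, ⊗, I) a small strict monoidal category. The set Q_S(C) of functions Mor(C) → S, with pointwise addition, the monoidal convolution product (f×g)(γ) = ∑_{α⊗β = γ} g(β)·f(α) (sum over all factorizations of γ as a tensor product of two morphisms), and unit the characteristic function of id_I, is a complete semiring. -/

import Mathlib

/-- A complete (additive, commutative) monoid in the sense of Eilenberg: a commutative
monoid equipped with a summation law over arbitrary index sets, extending finite sums
and satisfying the partition axiom. -/
class CompleteAddMonoid (M : Type) [AddCommMonoid M] where
  csum : {I : Type} → (I → M) → M
  csum_empty : ∀ {I : Type} [IsEmpty I] (f : I → M), csum f = 0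
  csum_unique : ∀ {I : Type} [Unique I] (f : I → M), csum f = f default
  csum_pair : ∀ (f : Bool → M), csum f = f true + f false
  csum_partition : ∀ {I J : Type} (p : I → J) (f : I → M),
    csum (fun j : J => csum (fun i : {i : I // p i = j} => f i.1)) = csum f

/-- A complete semiring: a semiring whose additive monoid is complete and where
multiplication distributes over infinite sums from both sides. -/
class CompleteSemiring (S : Type) [Semiring S] extends CompleteAddMonoid S where
  csum_mul_left : ∀ {I : Type} (s : S) (f : I → S),
    s * csum f = csum (fun i => s * f i)
  csum_mul_right : ∀ {I : Type} (s : S) (f : I → S),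
    csum f * s = csum (fun i => f i * s)

open CompleteAddMonoid

open CategoryTheory

open scoped Classical

/-- The set of all morphisms of a small category, as a type. -/
def Mor (C : Type) [SmallCategory C] : Type := Σ X Y : C, X ⟶ Y

/-- A strict monoidal structure on a small category `C`: a tensor product on objects
and morphisms which is strictly associative and strictly unital, together with the
interchange law making it a bifunctor. -/
structure StrictMonoidalStruct (C : Type) [SmallCategory C] where
  tO : C → C → C
  unit : C
  tH : {X Y X' Y' : C} → (X ⟶ Y) → (X' ⟶ Y') → (tO X X' ⟶ tO Y Y')
  assocO : ∀ X Y Z : C, tO (tO X Y) Z = tO X (tO Y Z)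
  unitO_left : ∀ X : C, tO unit X = X
  unitO_right : ∀ X : C, tO X unit = X
  assocH : ∀ {X Y X' Y' X'' Y'' : C} (f : X ⟶ Y) (g : X' ⟶ Y') (h : X'' ⟶ Y''),
    HEq (tH (tH f g) h) (tH f (tH g h))
  unitH_left : ∀ {X Y : C} (f : X ⟶ Y), HEq (tH (𝟙 unit) f) f
  unitH_right : ∀ {X Y : C} (f : X ⟶ Y), HEq (tH f (𝟙 unit)) f
  id_tensor_id : ∀ X Y : C, tH (𝟙 X) (𝟙 Y) = 𝟙 (tO X Y)
  interchange : ∀ {X Y Z X' Y' Z' : C} (f : X ⟶ Y) (g : Y ⟶ Z) (f' : X' ⟶ Y') (g' : Y' ⟶ Z'),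
    tH (f ≫ g) (f' ≫ g') = tH f f' ≫ tH g g'

/-- The tensor product of two morphisms, at the level of the set `Mor C`. -/
def StrictMonoidalStruct.tMor {C : Type} [SmallCategory C]
    (M : StrictMonoidalStruct C) (m m' : Mor C) : Mor C :=
  ⟨M.tO m.1 m'.1, M.tO m.2.1 m'.2.1, M.tH m.2.2 m'.2.2⟩

/-- The monoidal convolution product on `Q_S(C)`:
`(f × g)(γ) = ∑_{α ⊗ β = γ} g(β) · f(α)`, summing over all factorizations of `γ`
as a tensor product of two morphisms. -/
noncomputable def convM {S : Type} [Semiring S] [CompleteSemiring S]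
    {C : Type} [SmallCategory C] (M : StrictMonoidalStruct C)
    (f g : Mor C → S) : Mor C → S :=
  fun γ => csum (fun t : {p : Mor C × Mor C // M.tMor p.1 p.2 = γ} =>
    g t.1.2 * f t.1.1)

/-- The unit for monoidal convolution: the characteristic function of `id_I`. -/
noncomputable def convMOne {S : Type} [Semiring S]
    {C : Type} [SmallCategory C] (M : StrictMonoidalStruct C) : Mor C → S :=
  fun γ => if γ = ⟨M.unit, M.unit, 𝟙 M.unit⟩ then 1 else 0

section Helpers

variable {M : Type} [AddCommMonoid M] [CompleteAddMonoid M]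

lemma csum_reindex {I J : Type} (e : I ≃ J) (f : J → M) :
    csum (fun i => f (e i)) = csum f := by
  rw [← csum_partition (fun i : I => e i) (fun i => f (e i))]
  refine congrArg csum (funext fun j => ?_)
  letI : Unique {i : I // e i = j} :=
    { default := ⟨e.symm j, e.apply_symm_apply j⟩
      uniq := fun x => Subtype.ext (by simp [← x.2]) }
  rw [csum_unique]
  exact congrArg f (e.apply_symm_apply j)

/-- The fiber of `Sigma.fst` over `i` is `F i`. -/
def sigmaFiberEquiv {I : Type} {F : I → Type} (i : I) :
    F i ≃ {s : Σ i, F i // s.1 = i} where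
  toFun x := ⟨⟨i, x⟩, rfl⟩
  invFun s := cast (congrArg F s.2) s.1.2
  left_inv x := rfl
  right_inv := by rintro ⟨⟨j, y⟩, rfl⟩; rfl

lemma csum_sigma' {I : Type} {F : I → Type} (f : (Σ i, F i) → M) :
    csum (fun i => csum (fun x : F i => f ⟨i, x⟩)) = csum f := by
  rw [← csum_partition (Sigma.fst) f]
  refine congrArg csum (funext fun i => ?_)
  exact csum_reindex (sigmaFiberEquiv i) (fun s : {s : Σ i, F i // s.1 = i} => f s.1)

lemma csum_prod_fst {A B : Type} (f : A × B → M) :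
    csum (fun a => csum (fun b => f (a, b))) = csum f := by
  have h1 := csum_sigma' (F := fun _ : A => B) (fun s => f (s.1, s.2))
  have h2 := csum_reindex (Equiv.sigmaEquivProd A B) f
  exact h1.trans h2

lemma csum_prod_snd {A B : Type} (f : A × B → M) :
    csum (fun b => csum (fun a => f (a, b))) = csum f := by
  have h1 := csum_prod_fst (fun x : B × A => f (x.2, x.1))
  have h2 := csum_reindex (Equiv.prodComm B A) f
  exact h1.trans h2

lemma csum_comm {A B : Type} (F : A → B → M) :
    csum (fun a => csum (fun b => F a b)) = csum (fun b => csum (fun a => F a b)) :=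
  (csum_prod_fst (fun x => F x.1 x.2)).trans (csum_prod_snd (fun x => F x.1 x.2)).symm

lemma csum_add {I : Type} (a b : I → M) :
    csum (fun i => a i + b i) = csum a + csum b := by
  have h1 : csum (fun x : I × Bool => if x.2 then a x.1 else b x.1) = csum a + csum b := by
    rw [← csum_prod_snd (fun x : I × Bool => if x.2 then a x.1 else b x.1), csum_pair]
    simp
  rw [← h1, ← csum_prod_fst (fun x : I × Bool => if x.2 then a x.1 else b x.1)]
  refine congrArg csum (funext fun i => ?_)
  rw [csum_pair]
  simp

lemma csum_zero' {S : Type} [Semiring S] [CompleteSemiring S] (I : Type) :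
    csum (fun _ : I => (0 : S)) = 0 := by
  have h := CompleteSemiring.csum_mul_left (I := I) (0 : S) (fun _ => (1 : S))
  simpa using h.symm

lemma csum_eq_single {S : Type} [Semiring S] [CompleteSemiring S] {I : Type}
    (f : I → S) (i0 : I) (h : ∀ i, i ≠ i0 → f i = 0) : csum f = f i0 := by
  rw [← csum_partition (fun i => decide (i = i0)) f, csum_pair]
  have h1 : csum (fun i : {i : I // decide (i = i0) = true} => f i.1) = f i0 := by
    letI : Unique {i : I // decide (i = i0) = true} :=
      { default := ⟨i0, by simp⟩
        uniq := fun x => Subtype.ext (of_decide_eq_true x.2) }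
    rw [csum_unique]
    rfl
  have h2 : csum (fun i : {i : I // decide (i = i0) = false} => f i.1) = 0 := by
    rw [show (fun i : {i : I // decide (i = i0) = false} => f i.1) = fun _ => (0 : S)
        from funext fun x => h x.1 (of_decide_eq_false x.2)]
    exact csum_zero' _
  rw [h1, h2, add_zero]

lemma Mor_ext {C : Type} [SmallCategory C] {X Y X' Y' : C} {f : X ⟶ Y} {f' : X' ⟶ Y'}
    (h1 : X = X') (h2 : Y = Y') (h3 : HEq f f') :
    (⟨X, Y, f⟩ : Mor C) = ⟨X', Y', f'⟩ := by
  subst h1; subst h2; rw [eq_of_heq h3]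

lemma tMor_assoc {C : Type} [SmallCategory C] (M : StrictMonoidalStruct C) (a b c : Mor C) :
    M.tMor (M.tMor a b) c = M.tMor a (M.tMor b c) := by
  obtain ⟨X, Y, f⟩ := a; obtain ⟨X', Y', g⟩ := b; obtain ⟨X'', Y'', h⟩ := c
  exact Mor_ext (M.assocO X X' X'') (M.assocO Y Y' Y'') (M.assocH f g h)

lemma tMor_unit_right {C : Type} [SmallCategory C] (M : StrictMonoidalStruct C) (m : Mor C) :
    M.tMor m ⟨M.unit, M.unit, 𝟙 M.unit⟩ = m := by
  obtain ⟨X, Y, f⟩ := m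
  exact Mor_ext (M.unitO_right X) (M.unitO_right Y) (M.unitH_right f)

lemma tMor_unit_left {C : Type} [SmallCategory C] (M : StrictMonoidalStruct C) (m : Mor C) :
    M.tMor ⟨M.unit, M.unit, 𝟙 M.unit⟩ m = m := by
  obtain ⟨X, Y, f⟩ := m
  exact Mor_ext (M.unitO_left X) (M.unitO_left Y) (M.unitH_left f)

/-- The type of factorizations of `γ` as a tensor product. -/
abbrev Fac {C : Type} [SmallCategory C] (M : StrictMonoidalStruct C) (γ : Mor C) : Type :=
  {p : Mor C × Mor C // M.tMor p.1 p.2 = γ}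

/-- Reassociation of iterated factorizations. -/
def assocFacEquiv {C : Type} [SmallCategory C] (M : StrictMonoidalStruct C) (γ : Mor C) :
    (Σ t : Fac M γ, Fac M t.1.1) ≃ (Σ t : Fac M γ, Fac M t.1.2) where
  toFun s := ⟨⟨(s.2.1.1, M.tMor s.2.1.2 s.1.1.2), by
    rw [← tMor_assoc, s.2.2]; exact s.1.2⟩, ⟨(s.2.1.2, s.1.1.2), rfl⟩⟩
  invFun s := ⟨⟨(M.tMor s.1.1.1 s.2.1.1, s.2.1.2), by
    rw [tMor_assoc, s.2.2]; exact s.1.2⟩, ⟨(s.1.1.1, s.2.1.1), rfl⟩⟩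
  left_inv := by
    rintro ⟨⟨⟨α, β⟩, h1⟩, ⟨⟨a, b⟩, h2⟩⟩
    have h2' : M.tMor a b = α := h2
    subst h2'
    rfl
  right_inv := by
    rintro ⟨⟨⟨a, δ⟩, h1⟩, ⟨⟨b, c⟩, h2⟩⟩
    have h2' : M.tMor b c = δ := h2
    subst h2'
    rfl

end Helpers

/-- `Q_S(C)` with pointwise addition and pointwise summation, the monoidal convolution
product and the characteristic function of `id_I` as unit, is a complete semiring. -/
theorem monoidal_convolution_complete_semiring (S : Type) [Semiring S] [CompleteSemiring S]
    (C : Type) [SmallCategory C] (M : StrictMonoidalStruct C) :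
    (∃ cm : CompleteAddMonoid (Mor C → S),
      ∀ (I : Type) (fs : I → Mor C → S) (γ : Mor C),
        cm.csum fs γ = csum (fun i => fs i γ)) ∧
    (∀ f g h : Mor C → S, convM M (convM M f g) h = convM M f (convM M g h)) ∧
    (∀ f : Mor C → S, convM M f (convMOne M) = f) ∧
    (∀ f : Mor C → S, convM M (convMOne M) f = f) ∧
    (∀ f g h : Mor C → S, convM M f (g + h) = convM M f g + convM M f h) ∧
    (∀ f g h : Mor C → S, convM M (f + g) h = convM M f h + convM M g h) ∧
    (∀ f : Mor C → S, convM M f 0 = 0) ∧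
    (∀ f : Mor C → S, convM M 0 f = 0) ∧
    (∀ (I : Type) (fs : I → Mor C → S) (g : Mor C → S) (γ : Mor C),
      convM M g (fun δ => csum (fun i => fs i δ)) γ = csum (fun i => convM M g (fs i) γ)) ∧
    (∀ (I : Type) (fs : I → Mor C → S) (g : Mor C → S) (γ : Mor C),
      convM M (fun δ => csum (fun i => fs i δ)) g γ = csum (fun i => convM M (fs i) g γ)) := by
  refine ⟨?_, ?_, ?_, ?_, ?_, ?_, ?_, ?_, ?_, ?_⟩
  · -- complete additive monoid structure, pointwise
    refine ⟨{ csum := fun {I} fs γ => csum (fun i => fs i γ)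
              csum_empty := fun {I} _ f => funext fun γ => csum_empty _
              csum_unique := fun {I} _ f => funext fun γ => csum_unique _
              csum_pair := fun f => funext fun γ => csum_pair _
              csum_partition := fun {I J} p f => funext fun γ =>
                csum_partition p (fun i => f i γ) }, fun I fs γ => rfl⟩
  · -- associativity
    intro f g h
    funext γ
    show csum (fun t : Fac M γ => h t.1.2 * convM M f g t.1.1)
       = csum (fun t : Fac M γ => convM M g h t.1.2 * f t.1.1)
    calc csum (fun t : Fac M γ => h t.1.2 * convM M f g t.1.1)
        = csum (fun t : Fac M γ =>
            csum (fun q : Fac M t.1.1 => h t.1.2 * (g q.1.2 * f q.1.1))) := by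
          refine congrArg csum (funext fun t => ?_)
          exact CompleteSemiring.csum_mul_left _ _
      _ = csum (fun s : Σ t : Fac M γ, Fac M t.1.1 =>
            h s.1.1.2 * (g s.2.1.2 * f s.2.1.1)) :=
          csum_sigma' (F := fun t : Fac M γ => Fac M t.1.1)
            (fun s => h s.1.1.2 * (g s.2.1.2 * f s.2.1.1))
      _ = csum (fun s : Σ t : Fac M γ, Fac M t.1.2 =>
            (h s.2.1.2 * g s.2.1.1) * f s.1.1.1) := by
          rw [← csum_reindex (assocFacEquiv M γ) (fun s : Σ t : Fac M γ, Fac M t.1.2 =>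
            (h s.2.1.2 * g s.2.1.1) * f s.1.1.1)]
          refine congrArg csum (funext fun s => ?_)
          exact (mul_assoc _ _ _).symm
      _ = csum (fun t : Fac M γ =>
            csum (fun q : Fac M t.1.2 => (h q.1.2 * g q.1.1) * f t.1.1)) :=
          (csum_sigma' (F := fun t : Fac M γ => Fac M t.1.2)
            (fun s => (h s.2.1.2 * g s.2.1.1) * f s.1.1.1)).symm
      _ = csum (fun t : Fac M γ => convM M g h t.1.2 * f t.1.1) := by
          refine congrArg csum (funext fun t => ?_)
          exact (CompleteSemiring.csum_mul_right _ _).symm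
  · -- right unit
    intro f
    funext γ
    show csum (fun t : Fac M γ => convMOne M t.1.2 * f t.1.1) = f γ
    rw [csum_eq_single _ (⟨(γ, ⟨M.unit, M.unit, 𝟙 M.unit⟩), tMor_unit_right M γ⟩ : Fac M γ)]
    · simp [convMOne]
      intro hne; exact absurd rfl hne
    · intro t ht
      by_cases h2 : t.1.2 = (⟨M.unit, M.unit, 𝟙 M.unit⟩ : Mor C)
      · exfalso
        apply ht
        have h3 : t.1.1 = γ := by
          have h4 := t.2
          rw [h2, tMor_unit_right] at h4
          exact h4
        exact Subtype.ext (Prod.ext_iff.mpr ⟨h3, h2⟩)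
      · simp [convMOne, h2]
  · -- left unit
    intro f
    funext γ
    show csum (fun t : Fac M γ => f t.1.2 * convMOne M t.1.1) = f γ
    rw [csum_eq_single _ (⟨(⟨M.unit, M.unit, 𝟙 M.unit⟩, γ), tMor_unit_left M γ⟩ : Fac M γ)]
    · simp [convMOne]
      intro hne; exact absurd rfl hne
    · intro t ht
      by_cases h2 : t.1.1 = (⟨M.unit, M.unit, 𝟙 M.unit⟩ : Mor C)
      · exfalso
        apply ht
        have h3 : t.1.2 = γ := by
          have h4 := t.2
          rw [h2, tMor_unit_left] at h4
          exact h4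
        exact Subtype.ext (Prod.ext_iff.mpr ⟨h2, h3⟩)
      · simp [convMOne, h2]
  · -- left distributivity
    intro f g h
    funext γ
    show csum (fun t : Fac M γ => (g + h) t.1.2 * f t.1.1)
       = csum (fun t : Fac M γ => g t.1.2 * f t.1.1)
         + csum (fun t : Fac M γ => h t.1.2 * f t.1.1)
    rw [← csum_add]
    exact congrArg csum (funext fun t => add_mul _ _ _)
  · -- right distributivity
    intro f g h
    funext γ
    show csum (fun t : Fac M γ => h t.1.2 * (f + g) t.1.1)
       = csum (fun t : Fac M γ => h t.1.2 * f t.1.1)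
         + csum (fun t : Fac M γ => h t.1.2 * g t.1.1)
    rw [← csum_add]
    exact congrArg csum (funext fun t => mul_add _ _ _)
  · -- f * 0 = 0
    intro f
    funext γ
    show csum (fun t : Fac M γ => (0 : Mor C → S) t.1.2 * f t.1.1) = (0 : S)
    exact (congrArg csum (funext fun t : Fac M γ => zero_mul (f t.1.1))).trans
      (csum_zero' _)
  · -- 0 * f = 0
    intro f
    funext γ
    show csum (fun t : Fac M γ => f t.1.2 * (0 : Mor C → S) t.1.1) = (0 : S)
    exact (congrArg csum (funext fun t : Fac M γ => mul_zero (f t.1.2))).trans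
      (csum_zero' _)
  · -- infinite distributivity on the left argument of ·
    intro I fs g γ
    show csum (fun t : Fac M γ => csum (fun i => fs i t.1.2) * g t.1.1)
       = csum (fun i => convM M g (fs i) γ)
    calc csum (fun t : Fac M γ => csum (fun i => fs i t.1.2) * g t.1.1)
        = csum (fun t : Fac M γ => csum (fun i => fs i t.1.2 * g t.1.1)) := by
          refine congrArg csum (funext fun t => ?_)
          exact CompleteSemiring.csum_mul_right _ _
      _ = csum (fun i => csum (fun t : Fac M γ => fs i t.1.2 * g t.1.1)) :=
          csum_comm _
      _ = csum (fun i => convM M g (fs i) γ) := rfl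
  · -- infinite distributivity on the right argument of ·
    intro I fs g γ
    show csum (fun t : Fac M γ => g t.1.2 * csum (fun i => fs i t.1.1))
       = csum (fun i => convM M (fs i) g γ)
    calc csum (fun t : Fac M γ => g t.1.2 * csum (fun i => fs i t.1.1))
        = csum (fun t : Fac M γ => csum (fun i => g t.1.2 * fs i t.1.1)) := by
          refine congrArg csum (funext fun t => ?_)
          exact CompleteSemiring.csum_mul_left _ _
      _ = csum (fun i => csum (fun t : Fac M γ => g t.1.2 * fs i t.1.1)) :=
          csum_comm _
      _ = csum (fun i => convM M (fs i) g γ) := rfl
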